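/- Let G be a finite group with trivial center and θ an irreducible character of G of degree n over a field F, arising from a faithful absolutely irreducible F-representation X: G → GL_n(F). Let N be the normalizer and Z the centralizer of X(G) in GL_n(F). Then N/Z is isomorphic to the inertia group I_{Aut(G)}(θ) = {α ∈ Aut(G) : θ∘α = θ}. -/

import Mathlib

variable {F : Type} [Field F] {V : Type} [AddCommGroup V] [Module F V]
  {G : Type} [Group G]

/-- The inertia group of a character `θ : G → F` in `Aut(G)`:
automorphisms `α` with `θ ∘ α = θ`. -/
def inertia (θ : G → F) : Subgroup (MulAut G) where
  carrier := {α | ∀ g, θ (α g) = θ g}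
  one_mem' := fun _ => rfl
  mul_mem' := fun {a b} ha hb g => by
    simpa [hb g] using ha (b g)
  inv_mem' := fun {a} ha g => by
    simpa using (ha (a⁻¹ g)).symm

private def evalAt (v : V) : (Module.End F V) →ₗ[F] V where
  toFun f := f v
  map_add' := by intros; rfl
  map_smul' := by intros; rfl

private lemma burnside [FiniteDimensional F V]
    (X : G →* (Module.End F V)ˣ)
    (hirr : ∀ W : Submodule F V, (∀ (g : G), ∀ v ∈ W, (X g : Module.End F V) v ∈ W) →
      W = ⊥ ∨ W = ⊤) 
    (habs : ∀ f : Module.End F V, (∀ g : G, f * (X g : Module.End F V) =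
      (X g : Module.End F V) * f) → ∃ c : F, f = c • (1 : Module.End F V)) :
    Submodule.span F (Set.range fun g => ((X g : Module.End F V))) = ⊤ := by
  classical
  set A := Submodule.span F (Set.range fun g => ((X g : Module.End F V))) with hA
  have hgen : ∀ g : G, (X g : Module.End F V) ∈ A := fun g => Submodule.subset_span ⟨g, rfl⟩
  have hXa : ∀ (g : G), ∀ a ∈ A, (X g : Module.End F V) * a ∈ A := by
    intro g a ha
    induction ha using Submodule.span_induction with
    | mem x hx =>
      obtain ⟨h, rfl⟩ := hx
      have : (X g : Module.End F V) * (X h : Module.End F V) = (X (g * h) : Module.End F V) := by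
        rw [map_mul]; rfl
      rw [this]; exact hgen _
    | zero => simpa using A.zero_mem
    | add x y hx hy ihx ihy => rw [mul_add]; exact A.add_mem ihx ihy
    | smul c x hx ihx => rw [mul_smul_comm]; exact A.smul_mem c ihx
  have main : ∀ m : ℕ, ∀ v : Fin m → V, LinearIndependent F v → ∀ w : Fin m → V,
      ∃ a ∈ A, ∀ i, a (v i) = w i := by
    intro m
    induction m with
    | zero => exact fun v _ w => ⟨0, A.zero_mem, fun i => i.elim0⟩
    | succ m IH =>
      intro v hv w
      set v' : Fin m → V := v ∘ Fin.castSucc with hv'def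
      have hv' : LinearIndependent F v' := hv.comp _ (Fin.castSucc_injective m)
      set vL := v (Fin.last m) with hvL
      set Φ : Submodule F (Module.End F V) :=
        A ⊓ ⨅ i : Fin m, LinearMap.ker (evalAt (v' i)) with hΦdef
      have hΦ : ∀ a : Module.End F V, a ∈ Φ ↔ a ∈ A ∧ ∀ i, a (v' i) = 0 := by
        intro a
        simp [hΦdef, Submodule.mem_inf, Submodule.mem_iInf, LinearMap.mem_ker, evalAt]
      set W : Submodule F V := Φ.map (evalAt vL) with hWdef
      have hWinv : ∀ (g : G), ∀ x ∈ W, (X g : Module.End F V) x ∈ W := by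
        rintro g x ⟨a, haΦ, rfl⟩
        refine ⟨(X g : Module.End F V) * a, ?_, rfl⟩
        rw [SetLike.mem_coe] at haΦ
        obtain ⟨h1, h2⟩ := (hΦ a).mp haΦ
        exact (hΦ _).mpr ⟨hXa g a h1, fun i => by
          simp [Module.End.mul_apply, h2 i]⟩
      rcases hirr W hWinv with hbot | htop
      · -- derive a contradiction
        exfalso
        have hΦL : ∀ a ∈ Φ, a vL = 0 := by
          intro a ha
          have : evalAt vL a ∈ W := ⟨a, ha, rfl⟩
          rw [hbot] at this
          simpa [evalAt] using this
        have hex : ∀ (i : Fin m) (u : V), ∃ a ∈ A, ∀ j, a (v' j) = if j = i then u else 0 :=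
          fun i u => IH v' hv' (fun j => if j = i then u else 0)
        choose χ hχA hχ using hex
        have hval : ∀ (i : Fin m) (b : Module.End F V), b ∈ A →
            ∀ u, (∀ j, b (v' j) = if j = i then u else 0) → b vL = χ i u vL := by
          intro i b hb u hbv
          have hmem : b - χ i u ∈ Φ := (hΦ _).mpr ⟨A.sub_mem hb (hχA i u), fun j => by
            simp [LinearMap.sub_apply, hbv j, hχ i u j]⟩
          have h0 := hΦL _ hmem
          rw [LinearMap.sub_apply, sub_eq_zero] at h0
          exact h0
        have hψadd : ∀ i (u u' : V), χ i (u + u') vL = χ i u vL + χ i u' vL := by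
          intro i u u'
          have := hval i (χ i u + χ i u') (A.add_mem (hχA i u) (hχA i u')) (u + u') (fun j => by
            rw [LinearMap.add_apply, hχ i u j, hχ i u' j]
            by_cases h : j = i <;> simp [h])
          simpa [LinearMap.add_apply] using this.symm
        have hψsmul : ∀ i (c : F) (u : V), χ i (c • u) vL = c • χ i u vL := by
          intro i c u
          have := hval i (c • χ i u) (A.smul_mem c (hχA i u)) (c • u) (fun j => by
            rw [LinearMap.smul_apply, hχ i u j]
            by_cases h : j = i <;> simp [h])
          simpa [LinearMap.smul_apply] using this.symm
        set ψ : Fin m → Module.End F V := fun i =>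
          { toFun := fun u => χ i u vL
            map_add' := hψadd i
            map_smul' := hψsmul i } with hψdef
        have hψcomm : ∀ i g, ψ i * (X g : Module.End F V) = (X g : Module.End F V) * ψ i := by
          intro i g
          ext u
          have := hval i ((X g : Module.End F V) * χ i u) (hXa g _ (hχA i u))
            ((X g : Module.End F V) u) (fun j => by
              rw [Module.End.mul_apply, hχ i u j]
              by_cases h : j = i <;> simp [h])
          simp only [Module.End.mul_apply] at this ⊢
          simp only [hψdef, LinearMap.coe_mk, AddHom.coe_mk]
          exact this.symm
        choose c hc using fun i => habs (ψ i) (hψcomm i)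
        have hrel : ∀ a ∈ A, a vL = ∑ i, c i • a (v' i) := by
          intro a ha
          have hd : a - ∑ i, χ i (a (v' i)) ∈ Φ := by
            refine (hΦ _).mpr ⟨A.sub_mem ha (Submodule.sum_mem A fun i _ => hχA _ _), fun j => ?_⟩
            rw [LinearMap.sub_apply, LinearMap.sum_apply, sub_eq_zero]
            rw [Finset.sum_congr rfl (fun i _ => hχ i (a (v' i)) j)]
            simp
          have h0 := hΦL _ hd
          rw [LinearMap.sub_apply, sub_eq_zero] at h0
          rw [h0, LinearMap.sum_apply]
          refine Finset.sum_congr rfl fun i _ => ?_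
          have h1 : χ i (a (v' i)) vL = ψ i (a (v' i)) := rfl
          rw [h1, hc i]
          simp
        have h1A : (1 : Module.End F V) ∈ A := by
          have := hgen 1
          rwa [map_one, Units.val_one] at this
        have hfin := hrel 1 h1A
        simp only [Module.End.one_apply] at hfin
        have hli := Fintype.linearIndependent_iff.mp hv (Fin.snoc (fun i => -(c i)) 1) ?_ (Fin.last m)
        · rw [Fin.snoc_last] at hli
          exact one_ne_zero hli
        · simp only [hv'def, hvL, Function.comp_apply] at hfin
          rw [Fin.sum_univ_castSucc]
          simp only [Fin.snoc_castSucc, Fin.snoc_last, one_smul, neg_smul]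
          rw [Finset.sum_neg_distrib, ← hfin]
          exact neg_add_cancel _
      · -- W = ⊤ : succeed
        obtain ⟨a₀, ha₀A, ha₀⟩ := IH v' hv' (fun i => w i.castSucc)
        have hmem : w (Fin.last m) - a₀ vL ∈ W := htop ▸ Submodule.mem_top
        obtain ⟨a₁, ha₁Φ, ha₁⟩ := hmem
        refine ⟨a₀ + a₁, A.add_mem ha₀A ((hΦ a₁).mp ha₁Φ).1, ?_⟩
        intro i
        refine Fin.lastCases ?_ ?_ i
        · have h1 : a₁ vL = w (Fin.last m) - a₀ vL := ha₁
          show a₀ vL + a₁ vL = w (Fin.last m)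
          rw [h1]
          abel
        · intro j
          have h2 := ((hΦ a₁).mp ha₁Φ).2 j
          show a₀ (v' j) + a₁ (v' j) = w j.castSucc
          rw [ha₀ j, h2, add_zero]
  rw [eq_top_iff]
  intro f _
  set b := Module.finBasis F V
  obtain ⟨a, haA, ha⟩ := main _ b b.linearIndependent (fun i => f (b i))
  have : a = f := b.ext ha
  exact this ▸ haA


private lemma trace_rankOne [FiniteDimensional F V] (x : V) (φ : V →ₗ[F] F) :
    LinearMap.trace F V ((LinearMap.toSpanSingleton F V x).comp φ) = φ x := by
  classical
  set b := Module.finBasis F V with hb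
  rw [LinearMap.trace_eq_matrix_trace F b, Matrix.trace]
  simp only [Matrix.diag_apply, LinearMap.toMatrix_apply, LinearMap.coe_comp,
    Function.comp_apply, LinearMap.toSpanSingleton_apply, map_smul, Finsupp.smul_apply,
    smul_eq_mul]
  have : ∀ i, φ (b i) * (b.repr x) i = (b.repr x) i * φ (b i) := fun i => mul_comm _ _
  rw [Finset.sum_congr rfl fun i _ => this i]
  have := b.sum_repr x
  calc ∑ i, (b.repr x) i * φ (b i) = φ (∑ i, (b.repr x) i • b i) := by
        rw [map_sum]; exact Finset.sum_congr rfl fun i _ => (map_smul φ _ _).symm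
    _ = φ x := by rw [this]

private lemma exists_dual_one [FiniteDimensional F V] {x : V} (hx : x ≠ 0) :
    ∃ ψ : V →ₗ[F] F, ψ x = 1 := by
  obtain ⟨g, hg⟩ := (LinearMap.toSpanSingleton F V x).exists_leftInverse_of_injective
    (LinearMap.ker_toSpanSingleton (R := F) (M := V) hx)
  refine ⟨g, ?_⟩
  have := congrArg (fun h => h (1 : F)) hg
  simpa [LinearMap.toSpanSingleton_apply] using this

private lemma trace_nondeg [FiniteDimensional F V] (m : Module.End F V)
    (h : ∀ f : Module.End F V, LinearMap.trace F V (m * f) = 0) : m = 0 := by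
  by_contra hm
  obtain ⟨x, hx⟩ : ∃ x, m x ≠ 0 := by
    by_contra h'
    push_neg at h'
    exact hm (LinearMap.ext fun x => by simp [h' x])
  obtain ⟨ψ, hψ⟩ := exists_dual_one (F := F) hx
  have key := h ((LinearMap.toSpanSingleton F V x).comp ψ)
  rw [LinearMap.trace_mul_comm] at key
  have : (LinearMap.toSpanSingleton F V x).comp ψ * m
      = (LinearMap.toSpanSingleton F V x).comp (ψ.comp m) := by
    ext v; simp [Module.End.mul_apply, LinearMap.toSpanSingleton_apply]
  rw [this, trace_rankOne] at key
  simp only [LinearMap.coe_comp, Function.comp_apply] at key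
  exact one_ne_zero (hψ ▸ key)


private lemma exists_conj [FiniteDimensional F V] [Nontrivial V]
    (X : G →* (Module.End F V)ˣ)
    (hspan : Submodule.span F (Set.range fun g => ((X g : Module.End F V))) = ⊤)
    (hirr : ∀ W : Submodule F V, (∀ (g : G), ∀ v ∈ W, (X g : Module.End F V) v ∈ W) →
      W = ⊥ ∨ W = ⊤)
    (α : MulAut G)
    (hα : ∀ g : G, LinearMap.trace F V (X (α g) : Module.End F V) =
      LinearMap.trace F V (X g : Module.End F V)) :
    ∃ u : (Module.End F V)ˣ, ∀ g : G,
      (u : Module.End F V) * (X g : Module.End F V) = (X (α g) : Module.End F V) * u := by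
  classical
  set S := Finsupp.linearCombination F (fun g => (X g : Module.End F V)) with hSdef
  set S' := Finsupp.linearCombination F (fun g => (X (α g) : Module.End F V)) with hS'def
  have hrangeeq : (Set.range fun g => (X (α g) : Module.End F V))
      = (Set.range fun g => (X g : Module.End F V)) := by
    have : (fun g => (X (α g) : Module.End F V)) = (fun g => (X g : Module.End F V)) ∘ α := rfl
    rw [this, Set.range_comp, α.surjective.range_eq, Set.image_univ]
  have hspanα : Submodule.span F (Set.range fun g => ((X (α g) : Module.End F V))) = ⊤ := by
    rw [hrangeeq, hspan]
  have hS : LinearMap.range S = ⊤ := by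
    rw [hSdef, Finsupp.range_linearCombination, hspan]
  have htr : ∀ (d : G →₀ F) (h : G),
      LinearMap.trace F V (S' d * (X (α h) : Module.End F V))
        = LinearMap.trace F V (S d * (X h : Module.End F V)) := by
    intro d h
    rw [hSdef, hS'def, Finsupp.linearCombination_apply, Finsupp.linearCombination_apply,
      Finsupp.sum_mul, Finsupp.sum_mul, map_finsuppSum, map_finsuppSum]
    refine Finsupp.sum_congr fun g _ => ?_
    rw [smul_mul_assoc, smul_mul_assoc, map_smul, map_smul]
    congr 1
    have e1 : (X (α g) : Module.End F V) * (X (α h) : Module.End F V)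
        = (X (α (g * h)) : Module.End F V) := by
      rw [map_mul, map_mul, Units.val_mul]
    have e2 : (X g : Module.End F V) * (X h : Module.End F V)
        = (X (g * h) : Module.End F V) := by
      rw [map_mul, Units.val_mul]
    rw [e1, e2, hα]
  have hker : ∀ c : G →₀ F, S c = 0 → S' c = 0 := by
    intro c hc
    apply trace_nondeg
    intro f
    have hf : f ∈ Submodule.span F (Set.range fun g => ((X (α g) : Module.End F V))) := by
      rw [hspanα]; trivial
    induction hf using Submodule.span_induction with
    | mem x hx =>
      obtain ⟨h, rfl⟩ := hx
      rw [htr c h, hc, zero_mul, map_zero]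
    | zero => rw [mul_zero, map_zero]
    | add x y hx hy ihx ihy => rw [mul_add, map_add, ihx, ihy, add_zero]
    | smul r x hx ihx => rw [mul_smul_comm, map_smul, ihx, smul_zero]
  obtain ⟨σ, hσ⟩ := S.exists_rightInverse_of_surjective hS
  set T := S'.comp σ with hTdef
  have hT : ∀ c : G →₀ F, T (S c) = S' c := by
    intro c
    have hd : S (σ (S c) - c) = 0 := by
      rw [map_sub, sub_eq_zero]
      exact congrArg (fun h => h (S c)) hσ
    have := hker _ hd
    rw [map_sub, sub_eq_zero] at this
    exact this
  have hTX : ∀ g : G, T (X g : Module.End F V) = (X (α g) : Module.End F V) := by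
    intro g
    have h1 : S (Finsupp.single g 1) = (X g : Module.End F V) := by
      rw [hSdef, Finsupp.linearCombination_single, one_smul]
    have h2 : S' (Finsupp.single g 1) = (X (α g) : Module.End F V) := by
      rw [hS'def, Finsupp.linearCombination_single, one_smul]
    rw [← h1, hT, h2]
  have hmem : ∀ a : Module.End F V,
      a ∈ Submodule.span F (Set.range fun g => ((X g : Module.End F V))) := by
    intro a; rw [hspan]; trivial
  have hmul1 : ∀ (g : G) (b : Module.End F V),
      T ((X g : Module.End F V) * b) = T (X g : Module.End F V) * T b := by
    intro g b
    induction hmem b using Submodule.span_induction with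
    | mem x hx =>
      obtain ⟨h, rfl⟩ := hx
      have e2 : (X g : Module.End F V) * (X h : Module.End F V)
          = (X (g * h) : Module.End F V) := by rw [map_mul, Units.val_mul]
      rw [e2, hTX, hTX, hTX, map_mul, map_mul, Units.val_mul]
    | zero => rw [mul_zero, map_zero, mul_zero]
    | add x y hx hy ihx ihy => rw [mul_add, map_add, ihx, ihy, map_add, mul_add]
    | smul r x hx ihx => rw [mul_smul_comm, map_smul, ihx, map_smul, mul_smul_comm]
  have hTmul : ∀ a b : Module.End F V, T (a * b) = T a * T b := by
    intro a b
    induction hmem a using Submodule.span_induction with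
    | mem x hx => obtain ⟨g, rfl⟩ := hx; exact hmul1 g b
    | zero => rw [zero_mul, map_zero, zero_mul]
    | add x y hx hy ihx ihy => rw [add_mul, map_add, ihx, ihy, map_add, add_mul]
    | smul r x hx ihx => rw [smul_mul_assoc, map_smul, ihx, map_smul, smul_mul_assoc]
  have hTsurj : Function.Surjective T := by
    rw [← LinearMap.range_eq_top, eq_top_iff, ← hspan]
    rw [Submodule.span_le]
    rintro _ ⟨g, rfl⟩
    exact ⟨(X (α.symm g) : Module.End F V), by rw [hTX, MulEquiv.apply_symm_apply]⟩
  have hTinj : Function.Injective T := LinearMap.injective_iff_surjective.mpr hTsurj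
  obtain ⟨v₀, hv₀⟩ := exists_ne (0 : V)
  obtain ⟨ψ, hψ⟩ := exists_dual_one (F := F) hv₀
  set p := (LinearMap.toSpanSingleton F V v₀).comp ψ with hpdef
  have hpp : p * p = p := by
    ext v
    simp [hpdef, Module.End.mul_apply, LinearMap.toSpanSingleton_apply, map_smul, hψ, smul_smul]
  have hpv₀ : p v₀ = v₀ := by
    simp [hpdef, LinearMap.toSpanSingleton_apply, hψ]
  have hTp0 : T p ≠ 0 := by
    intro h
    have hp : p = 0 := hTinj (by rw [h, map_zero])
    rw [hp] at hpv₀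
    exact hv₀ hpv₀.symm
  obtain ⟨w₀, hw₀⟩ : ∃ w, T p w ≠ 0 := by
    by_contra h'
    push_neg at h'
    exact hTp0 (LinearMap.ext fun w => by simp [h' w])
  set z₀ := T p w₀ with hz₀def
  have hz : T p z₀ = z₀ := by
    rw [hz₀def, ← Module.End.mul_apply, ← hTmul, hpp]
  set u : Module.End F V :=
    { toFun := fun v => T ((LinearMap.toSpanSingleton F V v).comp ψ) z₀
      map_add' := by
        intro v w
        have : (LinearMap.toSpanSingleton F V (v + w)).comp ψ
            = (LinearMap.toSpanSingleton F V v).comp ψ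
              + (LinearMap.toSpanSingleton F V w).comp ψ := by
          ext x
          simp [LinearMap.toSpanSingleton_apply, smul_add]
        rw [this, map_add, LinearMap.add_apply]
      map_smul' := by
        intro c v
        have : (LinearMap.toSpanSingleton F V (c • v)).comp ψ
            = c • ((LinearMap.toSpanSingleton F V v).comp ψ) := by
          ext x
          simp only [LinearMap.coe_comp, Function.comp_apply,
            LinearMap.toSpanSingleton_apply, LinearMap.smul_apply]
          rw [smul_comm]
        rw [this, map_smul, LinearMap.smul_apply]
        rfl } with hudef
  have hint : ∀ (a : Module.End F V) (v : V), u (a v) = T a (u v) := by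
    intro a v
    have hcomp : (LinearMap.toSpanSingleton F V (a v)).comp ψ
        = a * ((LinearMap.toSpanSingleton F V v).comp ψ) := by
      ext x
      simp [LinearMap.toSpanSingleton_apply, Module.End.mul_apply, map_smul]
    show T ((LinearMap.toSpanSingleton F V (a v)).comp ψ) z₀ = _
    rw [hcomp, hTmul, Module.End.mul_apply]
    rfl
  have huv₀ : u v₀ = z₀ := by
    show T ((LinearMap.toSpanSingleton F V v₀).comp ψ) z₀ = z₀
    rw [← hpdef, hz]
  have hkerinv : ∀ (g : G), ∀ v ∈ LinearMap.ker u, (X g : Module.End F V) v ∈ LinearMap.ker u := by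
    intro g v hv
    rw [LinearMap.mem_ker] at hv ⊢
    rw [hint, hv, map_zero]
  have hkerbot : LinearMap.ker u = ⊥ := by
    rcases hirr _ hkerinv with h | h
    · exact h
    · exfalso
      have : u v₀ = 0 := by
        have : v₀ ∈ LinearMap.ker u := by rw [h]; trivial
        rwa [LinearMap.mem_ker] at this
      rw [huv₀] at this
      exact hw₀ this
  have huinj : Function.Injective u := LinearMap.ker_eq_bot.mp hkerbot
  have hubij : Function.Bijective u :=
    ⟨huinj, LinearMap.injective_iff_surjective.mp huinj⟩
  set e := LinearEquiv.ofBijective u hubij with hedef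
  refine ⟨⟨u, e.symm.toLinearMap, ?_, ?_⟩, ?_⟩
  · ext v
    exact e.apply_symm_apply v
  · ext v
    exact e.symm_apply_apply v
  · intro g
    show u * (X g : Module.End F V) = (X (α g) : Module.End F V) * u
    ext v
    rw [Module.End.mul_apply, Module.End.mul_apply, hint, hTX]

private def conjE (X : G →* (Module.End F V)ˣ) (u : (Subgroup.normalizer (X.range : Set (Module.End F V)ˣ))) :
    X.range ≃* X.range where
  toFun x := ⟨(u : (Module.End F V)ˣ) * x * (u : (Module.End F V)ˣ)⁻¹,
    (Subgroup.mem_normalizer_iff.mp u.2 x).mp x.2⟩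
  invFun x := ⟨(u : (Module.End F V)ˣ)⁻¹ * x * (u : (Module.End F V)ˣ),
    (Subgroup.mem_normalizer_iff.mp u.2 _).mpr (by
      have hx := x.2
      have h : (u : (Module.End F V)ˣ) * ((u : (Module.End F V)ˣ)⁻¹ * x
          * (u : (Module.End F V)ˣ)) * (u : (Module.End F V)ˣ)⁻¹ = (x : (Module.End F V)ˣ) := by
        group
      rwa [h])⟩
  left_inv x := by
    ext
    simp [mul_assoc]
  right_inv x := by
    ext
    simp [mul_assoc]
  map_mul' x y := by
    ext
    simp [mul_assoc]

private noncomputable def rangeEquiv (X : G →* (Module.End F V)ˣ)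
    (hfaith : Function.Injective X) : G ≃* X.range :=
  MulEquiv.ofBijective X.rangeRestrict
    ⟨fun a b h => hfaith (congrArg Subtype.val h), X.rangeRestrict_surjective⟩

private lemma rangeEquiv_symm_spec (X : G →* (Module.End F V)ˣ)
    (hfaith : Function.Injective X) (y : X.range) :
    X ((rangeEquiv X hfaith).symm y) = (y : (Module.End F V)ˣ) := by
  have h : ∀ g, ((rangeEquiv X hfaith g : X.range) : (Module.End F V)ˣ) = X g := fun g => rfl
  conv_rhs => rw [← MulEquiv.apply_symm_apply (rangeEquiv X hfaith) y]
  exact (h ((rangeEquiv X hfaith).symm y)).symm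

private noncomputable def autOf (X : G →* (Module.End F V)ˣ)
    (hfaith : Function.Injective X) (u : (Subgroup.normalizer (X.range : Set (Module.End F V)ˣ))) : MulAut G :=
  ((rangeEquiv X hfaith).trans (conjE X u)).trans (rangeEquiv X hfaith).symm

private lemma autOf_spec (X : G →* (Module.End F V)ˣ)
    (hfaith : Function.Injective X) (u : (Subgroup.normalizer (X.range : Set (Module.End F V)ˣ))) (g : G) :
    X (autOf X hfaith u g) = (u : (Module.End F V)ˣ) * X g * (u : (Module.End F V)ˣ)⁻¹ := by
  show X ((rangeEquiv X hfaith).symm (conjE X u (rangeEquiv X hfaith g))) = _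
  rw [rangeEquiv_symm_spec]
  rfl

/-- Let `G` be a finite group with trivial centre and `X : G → GL(V)` a faithful
absolutely irreducible representation on an `n`-dimensional `F`-space `V`, with
character `θ = tr ∘ X`.  If `N` and `Z` are the normalizer and the centralizer of
`X(G)` in `GL(V)`, then `N/Z` is isomorphic to the inertia group
`I_{Aut(G)}(θ) = {α ∈ Aut(G) : θ ∘ α = θ}`. -/
theorem normalizer_quotient_centralizer_iso_inertia
    [Finite G] (hZG : Subgroup.center G = ⊥)
    [FiniteDimensional F V] (n : ℕ) (hn : Module.finrank F V = n)
    (X : G →* (Module.End F V)ˣ) (hfaith : Function.Injective X)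
    (hirr : ∀ W : Submodule F V, (∀ (g : G), ∀ v ∈ W, (X g : Module.End F V) v ∈ W) →
      W = ⊥ ∨ W = ⊤)
    (habs : ∀ f : Module.End F V, (∀ g : G, f * (X g : Module.End F V) =
      (X g : Module.End F V) * f) → ∃ c : F, f = c • (1 : Module.End F V)) :
    ∃ φ : (Subgroup.normalizer (X.range : Set (Module.End F V)ˣ)) →*
        (inertia (fun g => LinearMap.trace F V (X g : Module.End F V))),
      Function.Surjective φ ∧
        φ.ker = (Subgroup.centralizer (X.range : Set (Module.End F V)ˣ)).subgroupOf
          (Subgroup.normalizer (X.range : Set (Module.End F V)ˣ)) := by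
  classical
  rcases subsingleton_or_nontrivial V with hV | hV
  · haveI : Subsingleton (Module.End F V) :=
      ⟨fun a b => LinearMap.ext fun v => Subsingleton.elim _ _⟩
    haveI : Subsingleton (Module.End F V)ˣ := ⟨fun a b => Units.ext (Subsingleton.elim _ _)⟩
    haveI : Subsingleton G := ⟨fun a b => hfaith (Subsingleton.elim _ _)⟩
    haveI : Subsingleton (MulAut G) := ⟨fun a b => MulEquiv.ext fun g => Subsingleton.elim _ _⟩
    refine ⟨1, fun y => ⟨1, Subsingleton.elim _ _⟩, ?_⟩
    ext x
    refine iff_of_true (by rw [MonoidHom.mem_ker]; rfl) ?_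
    rw [Subgroup.mem_subgroupOf, Subgroup.mem_centralizer_iff]
    intro m hm
    exact Subsingleton.elim _ _
  · have hspan := burnside X hirr habs
    have hmemI : ∀ u : (Subgroup.normalizer (X.range : Set (Module.End F V)ˣ)), autOf X hfaith u ∈
        inertia (fun g => LinearMap.trace F V (X g : Module.End F V)) := by
      intro u g
      show LinearMap.trace F V (X (autOf X hfaith u g) : Module.End F V)
        = LinearMap.trace F V (X g : Module.End F V)
      rw [autOf_spec, Units.val_mul, Units.val_mul, LinearMap.trace_mul_comm, ← mul_assoc,
        ← Units.val_mul, inv_mul_cancel, Units.val_one, one_mul]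
    set φ : ((Subgroup.normalizer (X.range : Set (Module.End F V)ˣ))) →*
        (inertia (fun g => LinearMap.trace F V (X g : Module.End F V))) :=
      { toFun := fun u => ⟨autOf X hfaith u, hmemI u⟩
        map_one' := by
          refine Subtype.ext (MulEquiv.ext fun g => hfaith ?_)
          rw [autOf_spec]
          simp
        map_mul' := by
          intro u v
          refine Subtype.ext (MulEquiv.ext fun g => hfaith ?_)
          show X (autOf X hfaith (u * v) g) = X ((autOf X hfaith u * autOf X hfaith v) g)
          rw [MulAut.mul_apply, autOf_spec, autOf_spec, autOf_spec]
          simp [mul_assoc, Subgroup.coe_mul, MulMemClass.coe_mul, mul_inv_rev]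
          change ((u : (Module.End F V)ˣ) * (v : (Module.End F V)ˣ)) *
            (X g * ((u : (Module.End F V)ˣ) * (v : (Module.End F V)ˣ))⁻¹) = _
          simp [mul_assoc] } with hφdef
    refine ⟨φ, ?_, ?_⟩
    · rintro ⟨α, hαmem⟩
      have hα : ∀ g : G, LinearMap.trace F V (X (α g) : Module.End F V) =
          LinearMap.trace F V (X g : Module.End F V) := fun g => hαmem g
      obtain ⟨uu, hu⟩ := exists_conj X hspan hirr α hα
      have hu' : ∀ g, uu * X g = X (α g) * uu := fun g =>
        Units.ext (by rw [Units.val_mul, Units.val_mul]; exact hu g)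
      have hconj : ∀ g, uu * X g * uu⁻¹ = X (α g) := fun g => by
        rw [hu' g, mul_inv_cancel_right]
      have hN : uu ∈ (Subgroup.normalizer (X.range : Set (Module.End F V)ˣ)) := by
        rw [Subgroup.mem_normalizer_iff]
        intro h
        constructor
        · rintro ⟨g, rfl⟩
          rw [hconj]
          exact ⟨α g, rfl⟩
        · rintro ⟨g, hg⟩
          refine ⟨α.symm g, ?_⟩
          have h1 := hconj (α.symm g)
          rw [MulEquiv.apply_symm_apply] at h1
          have h2 : uu * X (α.symm g) * uu⁻¹ = uu * h * uu⁻¹ := by rw [h1, hg]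
          exact mul_left_cancel (mul_right_cancel h2)
      refine ⟨⟨uu, hN⟩, ?_⟩
      refine Subtype.ext (MulEquiv.ext fun g => hfaith ?_)
      show X (autOf X hfaith ⟨uu, hN⟩ g) = X (α g)
      rw [autOf_spec]
      exact hconj g
    · ext u
      rw [MonoidHom.mem_ker, Subgroup.mem_subgroupOf, Subgroup.mem_centralizer_iff]
      constructor
      · intro h m hm
        obtain ⟨g, rfl⟩ := hm
        have h1 : autOf X hfaith u = 1 := congrArg Subtype.val h
        have h2 := autOf_spec X hfaith u g
        rw [h1] at h2
        simp only [MulAut.one_apply] at h2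
        have h3 := congrArg (fun y => y * (u : (Module.End F V)ˣ)) h2
        simp only [inv_mul_cancel_right] at h3
        exact h3
      · intro h
        refine Subtype.ext (MulEquiv.ext fun g => hfaith ?_)
        show X (autOf X hfaith u g) = X ((1 : MulAut G) g)
        rw [autOf_spec, MulAut.one_apply, ← h (X g) ⟨g, rfl⟩, mul_inv_cancel_right]
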